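/- Let f : ℝ^p → ℝ be differentiable with L-Lipschitz continuous gradient, suppose f attains its infimum f* = inf_y f(y) and the solution set Y* = {y ∈ ℝ^p : f(y) = f*} is nonempty, and suppose f satisfies the μ-Polyak–Łojasiewicz condition ‖∇f(y)‖² ≥ 2μ (f(y) − f*) for all y, with μ > 0. Then f satisfies the error-bound condition with constant μ: for every y ∈ ℝ^p, ‖∇f(y)‖ ≥ μ · dist(y, Y*), where dist(y, Y*) = inf_{y* ∈ Y*} ‖y − y*‖. -/

import Mathlib

open scoped RealInnerProductSpace

variable {F : Type*} [NormedAddCommGroup F] [InnerProductSpace ℝ F] [CompleteSpace F]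

/-- derivative of `t ↦ f (x + t • v)` -/
lemma line_hasDerivAt {f : F → ℝ} {g : F} (x v : F) (t : ℝ)
    (h : HasGradientAt f g (x + t • v)) :
    HasDerivAt (fun s : ℝ => f (x + s • v)) ⟪g, v⟫ t := by
  have h1 : HasDerivAt (fun s : ℝ => x + s • v) v t := by
    simpa using ((hasDerivAt_id t).smul_const v).const_add x
  have := (h.hasFDerivAt.comp_hasDerivAt t h1)
  simp [InnerProductSpace.toDual_apply_apply] at this
  exact this

/-- Descent lemma. -/
lemma descent {f : F → ℝ} {f' : F → F} {L : ℝ}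
    (hdiff : ∀ y, HasGradientAt f (f' y) y)
    (hlip : ∀ y₁ y₂, ‖f' y₁ - f' y₂‖ ≤ L * ‖y₁ - y₂‖) (x v : F) :
    f (x + v) ≤ f x + ⟪f' x, v⟫ + L / 2 * ‖v‖ ^ 2 := by
  set φ : ℝ → ℝ := fun t => f (x + t • v) - t * ⟪f' x, v⟫ - L / 2 * t ^ 2 * ‖v‖ ^ 2 with hφ
  have hder : ∀ t : ℝ, HasDerivAt φ (⟪f' (x + t • v), v⟫ - ⟪f' x, v⟫ - L * t * ‖v‖ ^ 2) t := by
    intro t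
    have h1 := line_hasDerivAt x v t (hdiff (x + t • v))
    have h2 : HasDerivAt (fun s : ℝ => s * ⟪f' x, v⟫) ⟪f' x, v⟫ t := by
      simpa using (hasDerivAt_id t).mul_const (⟪f' x, v⟫)
    have h3 : HasDerivAt (fun s : ℝ => L / 2 * s ^ 2 * ‖v‖ ^ 2) (L * t * ‖v‖ ^ 2) t := by
      have : HasDerivAt (fun s : ℝ => s ^ 2) (2 * t) t := by
        simpa using hasDerivAt_pow 2 t
      have := (this.const_mul (L / 2)).mul_const (‖v‖ ^ 2)
      rw [show L * t * ‖v‖ ^ 2 = L / 2 * (2 * t) * ‖v‖ ^ 2 by ring]; exact this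
    exact (h1.sub h2).sub h3
  have hmono : AntitoneOn φ (Set.Icc 0 1) := by
    apply antitoneOn_of_deriv_nonpos (convex_Icc 0 1)
    · exact (Differentiable.continuous fun t => (hder t).differentiableAt).continuousOn
    · intro t ht
      exact ((hder t).differentiableAt).differentiableWithinAt
    · intro t ht
      rw [(hder t).deriv]
      rw [interior_Icc] at ht
      have hineq : ⟪f' (x + t • v) - f' x, v⟫ ≤ L * t * ‖v‖ ^ 2 := by
        calc ⟪f' (x + t • v) - f' x, v⟫ ≤ ‖f' (x + t • v) - f' x‖ * ‖v‖ :=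
              real_inner_le_norm _ _
          _ ≤ (L * ‖(x + t • v) - x‖) * ‖v‖ := by
              gcongr; exact hlip _ _
          _ = L * (|t| * ‖v‖) * ‖v‖ := by rw [add_sub_cancel_left, norm_smul]; simp
          _ = L * t * ‖v‖ ^ 2 := by rw [abs_of_pos ht.1]; ring
      have : ⟪f' (x + t • v), v⟫ - ⟪f' x, v⟫ = ⟪f' (x + t • v) - f' x, v⟫ := by
        rw [inner_sub_left]
      linarith
  have := hmono (Set.left_mem_Icc.mpr zero_le_one) (Set.right_mem_Icc.mpr zero_le_one) zero_le_one
  simp only [hφ, zero_smul, add_zero, one_smul, one_pow, mul_one, zero_pow, mul_zero,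
    sub_zero, zero_mul] at this
  linarith


lemma grad_zero_of_min {f : F → ℝ} {g : F} {x : F} (h : HasGradientAt f g x)
    (hmin : ∀ z, f x ≤ f z) : g = 0 := by
  have hloc : IsLocalMin f x := Filter.Eventually.of_forall hmin
  have h1 := hloc.hasFDerivAt_eq_zero h.hasFDerivAt
  have h0 : InnerProductSpace.toDual ℝ F g = InnerProductSpace.toDual ℝ F 0 := by
    simpa using h1
  exact (InnerProductSpace.toDual ℝ F).injective h0

section step
variable {f : F → ℝ} {f' : F → F} {μ L η fstar : ℝ}
  (hμ : 0 < μ)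
  (hdiff : ∀ y, HasGradientAt f (f' y) y)
  (hlip : ∀ y₁ y₂, ‖f' y₁ - f' y₂‖ ≤ L * ‖y₁ - y₂‖)
  (hlow : ∀ y, fstar ≤ f y)
  (hPL : ∀ y, ‖f' y‖ ^ 2 ≥ 2 * μ * (f y - fstar))
  (hη : 0 < η) (hηL : η * L ≤ 1) (hημ : η * μ ≤ 1)

include hμ hdiff hlip hlow hPL hη hηL hημ

lemma step_key (x : F) :
    f (x - η • f' x) - fstar ≤ (1 - μ * η) * (f x - fstar) ∧
    η * ‖f' x‖ * ((1 - L * η / 2) * Real.sqrt (2 * μ) / 2)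
      ≤ Real.sqrt (f x - fstar) - Real.sqrt (f (x - η • f' x) - fstar) := by
  set x' := x - η • f' x with hx'
  have hdesc : f x' ≤ f x - η * (1 - L * η / 2) * ‖f' x‖ ^ 2 := by
    have h := descent hdiff hlip x (-(η • f' x))
    have h1 : ⟪f' x, -(η • f' x)⟫ = -(η * ‖f' x‖ ^ 2) := by
      rw [inner_neg_right, real_inner_smul_right, real_inner_self_eq_norm_sq]
    have h2 : ‖-(η • f' x)‖ ^ 2 = η ^ 2 * ‖f' x‖ ^ 2 := by
      rw [norm_neg, norm_smul, Real.norm_eq_abs, abs_of_pos hη, mul_pow]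
    rw [h1, h2] at h
    have hx : x + -(η • f' x) = x' := by rw [hx']; abel
    rw [hx] at h
    nlinarith [h]
  have hfac : (1:ℝ)/2 ≤ 1 - L * η / 2 := by nlinarith
  have hΔ0 : 0 ≤ f x - fstar := sub_nonneg.mpr (hlow x)
  have hΔ'0 : 0 ≤ f x' - fstar := sub_nonneg.mpr (hlow x')
  have hPLx := hPL x
  have hnn : (0:ℝ) ≤ 1 - L * η / 2 := by linarith
  have hstep_nn : 0 ≤ η * (1 - L * η / 2) * ‖f' x‖ ^ 2 :=
    mul_nonneg (mul_nonneg hη.le hnn) (sq_nonneg _)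
  have hdec : f x' - fstar ≤ (1 - μ * η) * (f x - fstar) := by
    have hp1 := mul_le_mul_of_nonneg_left hPLx (by positivity : (0:ℝ) ≤ η / 2)
    have hp2 := mul_le_mul_of_nonneg_left hfac (mul_nonneg hη.le (sq_nonneg ‖f' x‖))
    nlinarith [hp1, hp2, hdesc]
  refine ⟨hdec, ?_⟩
  rcases eq_or_lt_of_le hΔ0 with h0 | hpos
  · -- f x = fstar : gradient is zero
    have hfx : f x = fstar := by linarith [h0]
    have hg : f' x = 0 := grad_zero_of_min (hdiff x) (fun z => hfx ▸ hlow z)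
    have hΔ' : f x' - fstar = 0 := by
      have : x' = x := by rw [hx', hg]; simp
      rw [this, hfx]; ring
    rw [hg, hΔ', ← h0]; simp
  · set a := Real.sqrt (f x - fstar) with ha
    set b := Real.sqrt (f x' - fstar) with hb
    have hapos : 0 < a := Real.sqrt_pos.mpr hpos
    have hbnn : 0 ≤ b := Real.sqrt_nonneg _
    have ha2 : a ^ 2 = f x - fstar := Real.sq_sqrt (le_of_lt hpos)
    have hb2 : b ^ 2 = f x' - fstar := Real.sq_sqrt hΔ'0
    have hba : b ≤ a := by
      apply Real.sqrt_le_sqrt; linarith [hdesc, hstep_nn]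
    have hgrad : Real.sqrt (2 * μ) * a ≤ ‖f' x‖ := by
      refine abs_le_of_sq_le_sq' ?_ (norm_nonneg _) |>.2
      rw [mul_pow, Real.sq_sqrt (by positivity : (0:ℝ) ≤ 2 * μ), ha2]
      exact hPLx
    have hs2μ : 0 < Real.sqrt (2 * μ) := Real.sqrt_pos.mpr (by positivity)
    -- a² - b² ≥ η (1 - Lη/2) ‖f'x‖²  and  a² - b² ≤ 2a(a-b)
    have hkey : η * (1 - L * η / 2) * ‖f' x‖ ^ 2 ≤ 2 * a * (a - b) := by
      nlinarith [hdesc, hbnn, hba]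
    have hlow2 : η * (1 - L * η / 2) * (Real.sqrt (2 * μ) * a) * ‖f' x‖
        ≤ η * (1 - L * η / 2) * ‖f' x‖ ^ 2 := by
      have h1 : 0 ≤ η * (1 - L * η / 2) := mul_nonneg hη.le hnn
      nlinarith [mul_le_mul_of_nonneg_left hgrad (mul_nonneg h1 (norm_nonneg (f' x)))]
    have := hlow2.trans hkey
    have h2a : (0:ℝ) < 2 * a := by positivity
    rw [← mul_le_mul_iff_of_pos_right h2a]
    calc η * ‖f' x‖ * ((1 - L * η / 2) * Real.sqrt (2 * μ) / 2) * (2 * a)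
        = η * (1 - L * η / 2) * (Real.sqrt (2 * μ) * a) * ‖f' x‖ := by ring
      _ ≤ 2 * a * (a - b) := this
      _ = (a - b) * (2 * a) := by ring

open Filter Topology in
lemma dist_bound (y : F) :
    Metric.infDist y {z | f z = fstar} * ((1 - L * η / 2) * Real.sqrt (2 * μ) / 2)
      ≤ Real.sqrt (f y - fstar) := by
  set c : ℝ := (1 - L * η / 2) * Real.sqrt (2 * μ) / 2 with hc
  have hfac : (1:ℝ)/2 ≤ 1 - L * η / 2 := by nlinarith
  have hcpos : 0 < c := by
    have hs : 0 < Real.sqrt (2 * μ) := Real.sqrt_pos.mpr (by positivity)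
    rw [hc]; positivity
  set T : F → F := fun z => z - η • f' z with hT
  set x : ℕ → F := fun k => T^[k] y with hx
  have hx0 : x 0 = y := rfl
  have hxs : ∀ k, x (k + 1) = T (x k) := fun k => Function.iterate_succ_apply' T k y
  set Δ : ℕ → ℝ := fun k => f (x k) - fstar with hΔ
  have hΔnn : ∀ k, 0 ≤ Δ k := fun k => sub_nonneg.mpr (hlow (x k))
  have hstep := fun k => step_key hμ hdiff hlip hlow hPL hη hηL hημ (x k)
  have hdec : ∀ k, Δ (k + 1) ≤ (1 - μ * η) * Δ k := by
    intro k; rw [hΔ]; simp only; rw [hxs k]; exact (hstep k).1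
  have hdist : ∀ k, dist (x k) (x (k + 1)) = η * ‖f' (x k)‖ := by
    intro k
    rw [hxs k, hT, dist_eq_norm]
    simp only [sub_sub_cancel, norm_smul, Real.norm_eq_abs, abs_of_pos hη]
  set d : ℕ → ℝ := fun k => (Real.sqrt (Δ k) - Real.sqrt (Δ (k + 1))) / c with hd
  have hdd : ∀ k, dist (x k) (x (k + 1)) ≤ d k := by
    intro k
    rw [hdist k, hd]
    simp only
    rw [le_div_iff₀ hcpos]
    have h2 := (hstep k).2
    have he : Δ (k + 1) = f (x k - η • f' (x k)) - fstar := by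
      simp only [hΔ, hxs k, hT]
    rw [he]
    simp only [hΔ]
    exact h2
  have hdnn : ∀ k, 0 ≤ d k := fun k => le_trans dist_nonneg (hdd k)
  have hsum_le : ∀ n, ∑ i ∈ Finset.range n, d i ≤ Real.sqrt (Δ 0) / c := by
    intro n
    have he : ∑ i ∈ Finset.range n, d i
        = (Real.sqrt (Δ 0) - Real.sqrt (Δ n)) / c := by
      rw [hd, ← Finset.sum_div, Finset.sum_range_sub' (fun i => Real.sqrt (Δ i)) n]
    rw [he]
    gcongr
    linarith [Real.sqrt_nonneg (Δ n)]
  have hsummable : Summable d := summable_of_sum_range_le hdnn hsum_le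
  have hcauchy : CauchySeq x := cauchySeq_of_dist_le_of_summable d hdd hsummable
  obtain ⟨xbar, hxbar⟩ := cauchySeq_tendsto_of_complete hcauchy
  have hdiffble : Differentiable ℝ f := fun z => (hdiff z).hasFDerivAt.differentiableAt
  have hcont : Continuous f := hdiffble.continuous
  have hfx : Tendsto (fun k => f (x k)) atTop (𝓝 (f xbar)) :=
    (hcont.tendsto xbar).comp hxbar
  have hr0 : 0 ≤ 1 - μ * η := by nlinarith
  have hr1 : 1 - μ * η < 1 := by nlinarith
  have hgeo : ∀ k, Δ k ≤ (1 - μ * η) ^ k * Δ 0 := by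
    intro k; induction k with
    | zero => simp
    | succ n ih =>
      calc Δ (n+1) ≤ (1 - μ * η) * Δ n := hdec n
        _ ≤ (1 - μ * η) * ((1 - μ * η) ^ n * Δ 0) := mul_le_mul_of_nonneg_left ih hr0
        _ = (1 - μ * η) ^ (n+1) * Δ 0 := by ring
  have hΔ0' : Tendsto (fun k => (1 - μ * η) ^ k * Δ 0) atTop (𝓝 0) := by
    simpa using (tendsto_pow_atTop_nhds_zero_of_lt_one hr0 hr1).mul_const (Δ 0)
  have hΔtend : Tendsto Δ atTop (𝓝 0) := squeeze_zero hΔnn hgeo hΔ0'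
  have hfstar : f xbar = fstar := by
    have h1 : Tendsto (fun k => f (x k)) atTop (𝓝 fstar) := by
      have h2 := hΔtend.add_const fstar
      rw [zero_add] at h2
      refine h2.congr fun k => ?_
      simp [hΔ]
    exact tendsto_nhds_unique hfx h1
  have hmem : xbar ∈ {z | f z = fstar} := hfstar
  have h1 : Metric.infDist y {z | f z = fstar} ≤ dist y xbar :=
    Metric.infDist_le_dist_of_mem hmem
  have h2 : dist y xbar ≤ ∑' k, d k := by
    have := dist_le_tsum_of_dist_le_of_tendsto₀ d hdd hsummable hxbar
    rwa [hx0] at this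
  have h3 : ∑' k, d k ≤ Real.sqrt (Δ 0) / c :=
    Real.tsum_le_of_sum_range_le hdnn hsum_le
  have h4 : Metric.infDist y {z | f z = fstar} ≤ Real.sqrt (Δ 0) / c :=
    h1.trans (h2.trans h3)
  have hΔ0y : Real.sqrt (Δ 0) = Real.sqrt (f y - fstar) := by
    simp only [hΔ]; rw [hx0]
  rw [← hΔ0y, ← le_div_iff₀ hcpos]
  exact h4

end step

open Filter Topology

/-- A differentiable function with `L`-Lipschitz gradient that attains its
infimum `f*` and satisfies the `μ`-PL condition satisfies the error-bound condition
`‖∇f(y)‖ ≥ μ · dist(y, Y*)`, where `Y* = {y : f y = f*}`. -/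
theorem stmt_1 {p : ℕ} (μ L : ℝ) (hμ : 0 < μ)
    (f : EuclideanSpace ℝ (Fin p) → ℝ)
    (f' : EuclideanSpace ℝ (Fin p) → EuclideanSpace ℝ (Fin p))
    (hdiff : ∀ y, HasGradientAt f (f' y) y)
    (hlip : ∀ y₁ y₂, ‖f' y₁ - f' y₂‖ ≤ L * ‖y₁ - y₂‖)
    (fstar : ℝ) (hlow : ∀ y, fstar ≤ f y) (hattain : ∃ y, f y = fstar)
    (hPL : ∀ y, ‖f' y‖ ^ 2 ≥ 2 * μ * (f y - fstar)) :
    ∀ y, ‖f' y‖ ≥ μ * Metric.infDist y {z | f z = fstar} := by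
  intro y
  set S : Set (EuclideanSpace ℝ (Fin p)) := {z | f z = fstar} with hS
  set L' : ℝ := max L 1 with hL'
  have hL'1 : (1:ℝ) ≤ L' := le_max_right _ _
  have hL'pos : (0:ℝ) < L' := by linarith
  have hlip' : ∀ y₁ y₂, ‖f' y₁ - f' y₂‖ ≤ L' * ‖y₁ - y₂‖ := fun y₁ y₂ =>
    (hlip y₁ y₂).trans (mul_le_mul_of_nonneg_right (le_max_left _ _) (norm_nonneg _))
  set η₀ : ℝ := min (1 / L') (1 / μ) with hη₀
  have hη₀pos : 0 < η₀ := lt_min (by positivity) (by positivity)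
  have hbound : ∀ η, 0 < η → η ≤ η₀ →
      Metric.infDist y S * ((1 - L' * η / 2) * Real.sqrt (2 * μ) / 2)
        ≤ Real.sqrt (f y - fstar) := by
    intro η hη hηle
    refine dist_bound hμ hdiff hlip' hlow hPL hη ?_ ?_ y
    · have h1 : η ≤ 1 / L' := hηle.trans (min_le_left _ _)
      rw [le_div_iff₀ hL'pos] at h1; linarith
    · have h1 : η ≤ 1 / μ := hηle.trans (min_le_right _ _)
      rw [le_div_iff₀ hμ] at h1; linarith
  have t0 : Tendsto (fun n : ℕ => η₀ / ((n : ℝ) + 1)) atTop (𝓝 0) := by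
    have := tendsto_one_div_add_atTop_nhds_zero_nat.const_mul η₀
    simpa [mul_one_div, div_eq_mul_inv] using this
  set s : ℝ := Real.sqrt (2 * μ) with hs
  have t1 : Tendsto (fun n : ℕ => Metric.infDist y S *
      ((1 - L' * (η₀ / ((n : ℝ) + 1)) / 2) * s / 2)) atTop
      (𝓝 (Metric.infDist y S * ((1 - L' * 0 / 2) * s / 2))) :=
    (((tendsto_const_nhds.sub ((t0.const_mul L').div_const 2)).mul_const s).div_const
      2).const_mul _
  have hlim : Metric.infDist y S * (s / 2) ≤ Real.sqrt (f y - fstar) := by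
    have h := le_of_tendsto t1 (Filter.Eventually.of_forall fun n => by
      refine hbound _ (by positivity) ?_
      exact div_le_self hη₀pos.le (by exact_mod_cast Nat.le_add_left 1 n))
    simpa using h
  have hs2 : s * s = 2 * μ := Real.mul_self_sqrt (by positivity)
  have heq : Metric.infDist y S * (s / 2) * s = μ * Metric.infDist y S := by
    calc Metric.infDist y S * (s / 2) * s = Metric.infDist y S * (s * s) / 2 := by ring
      _ = μ * Metric.infDist y S := by rw [hs2]; ring
  have h5 : μ * Metric.infDist y S ≤ Real.sqrt (f y - fstar) * s := by
    rw [← heq]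
    exact mul_le_mul_of_nonneg_right hlim (Real.sqrt_nonneg _)
  have h6 : Real.sqrt (f y - fstar) * s = Real.sqrt (2 * μ * (f y - fstar)) := by
    rw [hs, Real.sqrt_mul (by positivity : (0:ℝ) ≤ 2 * μ)]; ring
  have h7 : Real.sqrt (2 * μ * (f y - fstar)) ≤ ‖f' y‖ := by
    rw [show ‖f' y‖ = Real.sqrt (‖f' y‖ ^ 2) from (Real.sqrt_sq (norm_nonneg _)).symm]
    exact Real.sqrt_le_sqrt (hPL y)
  rw [ge_iff_le]
  calc μ * Metric.infDist y S ≤ Real.sqrt (f y - fstar) * s := h5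
    _ = Real.sqrt (2 * μ * (f y - fstar)) := h6
    _ ≤ ‖f' y‖ := h7
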